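/- For a directed graph G, the minrank of G over any field F is at least the maximum number of vertices of an induced acyclic subgraph of G. -/

import Mathlib

/-- A matrix `M` over a field `F` represents a directed graph with adjacency relation `Adj`
if all diagonal entries are nonzero and `M u v = 0` whenever `u ≠ v` and `(u, v)` is not a
directed edge. -/
def RepresentsDi {V F : Type*} [Field F] (Adj : V → V → Prop) (M : Matrix V V F) : Prop :=
  (∀ v, M v v ≠ 0) ∧ ∀ u v : V, u ≠ v → ¬Adj u v → M u v = 0

/-- The minrank of a directed graph (given by its adjacency relation) over a field `F`. -/
noncomputable def minrankDi (F : Type*) [Field F] {V : Type*} [Fintype V] [DecidableEq V]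
    (Adj : V → V → Prop) : ℕ :=
  sInf {r : ℕ | ∃ M : Matrix V V F, RepresentsDi Adj M ∧ M.rank = r}

theorem rank_submatrix_le' {F : Type*} [Field F] {V W : Type*} [Fintype V] [DecidableEq V]
    [Fintype W] [DecidableEq W] (A : Matrix V V F) (f g : W → V) :
    (A.submatrix f g).rank ≤ A.rank := by
  have h1 : A.submatrix f g =
      ((1 : Matrix V V F).submatrix f id) * A * ((1 : Matrix V V F).submatrix id g) := by
    ext i j
    simp [Matrix.mul_apply, Matrix.one_apply, Finset.sum_ite_eq, Finset.sum_ite_eq',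
      mul_ite, ite_mul, Matrix.submatrix_apply]
  rw [h1]
  exact le_trans (Matrix.rank_mul_le_left _ _) (Matrix.rank_mul_le_right _ _)

theorem path_of_transGen {V : Type*} (Adj : V → V → Prop) (S : Finset V) {u v : V}
    (h : Relation.TransGen (fun a b => a ∈ S ∧ b ∈ S ∧ Adj a b) u v) :
    ∃ (n : ℕ) (c : Fin (n + 2) → V), (∀ i, c i ∈ S) ∧
      (∀ i : Fin (n + 1), Adj (c i.castSucc) (c i.succ)) ∧
      c 0 = u ∧ c (Fin.last (n + 1)) = v := by
  induction h with
  | @single w h =>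
    refine ⟨0, ![u, w], ?_, ?_, rfl, rfl⟩
    · intro i; fin_cases i <;> simp [h.1, h.2.1]
    · intro i; fin_cases i; simpa using h.2.2
  | @tail b w hab hbc ih =>
    obtain ⟨n, c, hmem, hedge, h0, hlast⟩ := ih
    refine ⟨n + 1, Fin.snoc c w, ?_, ?_, ?_, ?_⟩
    · intro i
      refine Fin.lastCases ?_ (fun j => ?_) i
      · simpa using hbc.2.1
      · simpa using hmem j
    · intro i
      refine Fin.lastCases ?_ (fun j => ?_) i
      · simp only [Fin.succ_last, Fin.snoc_last]
        rw [show (Fin.last (n+1)).castSucc = Fin.castSucc (Fin.last (n+1)) from rfl,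
          Fin.snoc_castSucc, hlast]
        exact hbc.2.2
      · rw [Fin.succ_castSucc, Fin.snoc_castSucc, Fin.snoc_castSucc]
        exact hedge j
    · rw [show (0 : Fin (n + 3)) = Fin.castSucc 0 from rfl, Fin.snoc_castSucc]; exact h0
    · simp

theorem transGen_irrefl_of_acyclic {V : Type*} (Adj : V → V → Prop) (S : Finset V)
    (hacyclic : ∀ (n : ℕ) (c : Fin (n + 1) → V), (∀ i, c i ∈ S) →
      (∀ i : Fin n, Adj (c i.castSucc) (c i.succ)) → ¬Adj (c (Fin.last n)) (c 0)) (u : V) :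
    ¬Relation.TransGen (fun a b => a ∈ S ∧ b ∈ S ∧ Adj a b) u u := by
  intro h
  obtain ⟨n, c, hmem, hedge, h0, hlast⟩ := path_of_transGen Adj S h
  have key := hacyclic n (fun i => c i.castSucc) (fun i => hmem _) (fun i => by
    have := hedge i.castSucc
    rwa [Fin.succ_castSucc] at this)
  apply key
  have := hedge (Fin.last n)
  have h1 : (Fin.last n).succ = Fin.last (n + 1) := by simp [Fin.succ_last]
  rw [h1, hlast, ← h0] at this
  simpa using this

/-- The minrank of a directed graph over any field `F` is at least the number of vertices of
any induced acyclic subgraph (a vertex subset `S` inducing no directed cycle). -/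
theorem minrankDi_ge_acyclic (F : Type*) [Field F] {V : Type*} [Fintype V] [DecidableEq V]
    (Adj : V → V → Prop) (S : Finset V)
    (hacyclic : ∀ (n : ℕ) (c : Fin (n + 1) → V), (∀ i, c i ∈ S) →
      (∀ i : Fin n, Adj (c i.castSucc) (c i.succ)) → ¬Adj (c (Fin.last n)) (c 0)) :
    S.card ≤ minrankDi F Adj := by
  have hne : {r : ℕ | ∃ M : Matrix V V F, RepresentsDi Adj M ∧ M.rank = r}.Nonempty := by
    refine ⟨(1 : Matrix V V F).rank, 1, ⟨fun v => by simp, fun u v huv _ => ?_⟩, rfl⟩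
    simp [Matrix.one_apply, huv]
  refine le_csInf hne ?_
  rintro r ⟨M, ⟨hdiag, hzero⟩, rfl⟩
  -- set up the subtype and the partial order from reachability
  set α := {x // x ∈ S}
  set edge : α → α → Prop := fun a b => Adj a.1 b.1 with hedge_def
  have hirr : ∀ a : α, ¬Relation.TransGen edge a a := by
    intro a ha
    exact transGen_irrefl_of_acyclic Adj S hacyclic a.1
      (Relation.TransGen.lift (fun x : α => x.1) (fun x y hxy => ⟨x.2, y.2, hxy⟩) _ _ ha)
  haveI hpo : IsPartialOrder α (Relation.ReflTransGen edge) :=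
    { refl := fun a => Relation.ReflTransGen.refl
      trans := fun a b c => Relation.ReflTransGen.trans
      antisymm := by
        intro a b hab hba
        rcases Relation.reflTransGen_iff_eq_or_transGen.1 hab with rfl | hab'
        · rfl
        · exact absurd (Relation.TransGen.trans_left hab' hba) (hirr a) }
  obtain ⟨s, hs, hrs⟩ := extend_partialOrder (Relation.ReflTransGen edge)
  haveI := hs
  letI : LinearOrder α :=
    { le := s
      lt := fun a b => s a b ∧ ¬s b a
      le_refl := fun a => refl_of s a
      le_trans := fun a b c => trans_of s
      le_antisymm := fun a b => antisymm_of s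
      le_total := fun a b => total_of s a b
      lt_iff_le_not_ge := fun _ _ => Iff.rfl
      toDecidableLE := Classical.decRel s }
  have hcard : Fintype.card α = S.card := Fintype.card_coe S
  set e := Fintype.orderIsoFinOfCardEq α hcard
  set f : Fin S.card → V := fun i => ((e i : α) : V) with hf
  set N := M.submatrix f f with hN
  have htri : N.BlockTriangular id := by
    intro i j hij
    simp only [id_eq] at hij
    have hne' : f i ≠ f j := by
      intro hfe
      exact absurd (e.injective (Subtype.ext hfe)) (by omega : i ≠ j)
    refine hzero (f i) (f j) hne' ?_
    intro hadj
    have h1 : s (e i) (e j) := hrs _ _ (Relation.ReflTransGen.single hadj)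
    have h2 : (e i : α) ≤ e j := h1
    have : i ≤ j := e.le_iff_le.1 h2
    omega
  have hdet : N.det ≠ 0 := by
    rw [Matrix.det_of_upperTriangular htri]
    exact Finset.prod_ne_zero_iff.2 fun i _ => hdiag (f i)
  have hrankN : N.rank = S.card := by
    rw [Matrix.rank_of_isUnit N ((Matrix.isUnit_iff_isUnit_det N).2 (isUnit_iff_ne_zero.2 hdet))]
    simp
  calc S.card = N.rank := hrankN.symm
    _ ≤ M.rank := rank_submatrix_le' M f f
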